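/- arXiv:2012.09317 — 3 statements merged into one kernel-verified Lean document; each statement's English description precedes it below -/
import Mathlib

section
/- Fix α∈(0,1), rates λ>0, μ>0, ξ≥0, an initial state i∈ℕ and z∈(0,1). Suppose the family P^α_n:[0,∞)→ℝ (n=0,1,2,…) solves the fractional Kolmogorov forward equations of order α of the M/M/1 queue with catastrophes, that for each t≥0 the series G(t) = ∑_{n=0}^∞ z^n P^α_n(t) converges absolutely, and that the Caputo derivative of G can be computed termwise, i.e. D^α G(t) = ∑_{n=0}^∞ z^n D^α P^α_n(t) for every t>0. Then G(0) = z^i and, for every t>0, z·D^α G(t) = (1−z)·[(μ − zλ − ξz/(1−z))·G(t) − μ·P^α_0(t) + ξz/(1−z)]. -/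
open MeasureTheory Real

/-- Caputo fractional derivative of order `α` of `f` at `t`. -/
noncomputable def caputoD (α : ℝ) (f : ℝ → ℝ) (t : ℝ) : ℝ :=
  (1 / Real.Gamma (1 - α)) * ∫ u in (0:ℝ)..t, (t - u) ^ (-α) * deriv f u

theorem stmt0 (α lam mu xi : ℝ) (hα : α ∈ Set.Ioo (0:ℝ) 1) (hlam : 0 < lam)
    (hmu : 0 < mu) (hxi : 0 ≤ xi) (i : ℕ) (z : ℝ) (hz : z ∈ Set.Ioo (0:ℝ) 1)
    (P : ℕ → ℝ → ℝ)
    (heq0 : ∀ t > (0:ℝ), caputoD α (P 0) t = -(lam + xi) * P 0 t + mu * P 1 t + xi)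
    (heqn : ∀ n : ℕ, 1 ≤ n → ∀ t > (0:ℝ),
      caputoD α (P n) t
        = -(lam + mu + xi) * P n t + lam * P (n - 1) t + mu * P (n + 1) t)
    (hinit : ∀ n : ℕ, P n 0 = if i = n then 1 else 0)
    (G : ℝ → ℝ) (hG : ∀ t : ℝ, G t = ∑' n : ℕ, z ^ n * P n t)
    (habs : ∀ t ≥ (0:ℝ), Summable fun n : ℕ => |z ^ n * P n t|)
    (hterm : ∀ t > (0:ℝ), caputoD α G t = ∑' n : ℕ, z ^ n * caputoD α (P n) t) :
    G 0 = z ^ i ∧ ∀ t > (0:ℝ),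
      z * caputoD α G t
        = (1 - z) * ((mu - z * lam - xi * z / (1 - z)) * G t - mu * P 0 t
            + xi * z / (1 - z)) := by
  obtain ⟨hz0, hz1⟩ := hz
  have hzne : z ≠ 0 := ne_of_gt hz0
  have h1z : (1:ℝ) - z ≠ 0 := by linarith
  constructor
  · rw [hG]
    have hfun : (fun n : ℕ => z ^ n * P n 0) = fun n => if n = i then z ^ i else 0 := by
      funext n
      rw [hinit n]
      by_cases h : i = n
      · subst h; simp
      · simp [h, Ne.symm h]
    rw [hfun, tsum_ite_eq]
  · intro t ht
    set A : ℕ → ℝ := fun n => z ^ n * P n t with hAdef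
    have hA : Summable A := (habs t ht.le).of_abs
    have hA1 : Summable (fun n => A (n + 1)) := (summable_nat_add_iff 1).2 hA
    have hA2 : Summable (fun n => A (n + 2)) := (summable_nat_add_iff 2).2 hA
    have hFval : ∀ n : ℕ, z ^ (n + 1) * caputoD α (P (n + 1)) t
        = (-(lam + mu + xi)) * A (n + 1) + ((lam * z) * A n + (mu / z) * A (n + 2)) := by
      intro n
      rw [heqn (n + 1) (by omega) t ht]
      simp only [hAdef, Nat.add_sub_cancel]
      field_simp
      ring
    have hF : Summable (fun n => z ^ (n + 1) * caputoD α (P (n + 1)) t) := by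
      refine ((hA1.mul_left (-(lam + mu + xi))).add
        ((hA.mul_left (lam * z)).add (hA2.mul_left (mu / z)))).congr ?_
      intro n; rw [hFval n]
    have htsumF : ∑' n, z ^ (n + 1) * caputoD α (P (n + 1)) t
        = (-(lam + mu + xi)) * (∑' n, A (n + 1))
          + ((lam * z) * (∑' n, A n) + (mu / z) * (∑' n, A (n + 2))) := by
      rw [← tsum_mul_left, ← tsum_mul_left, ← tsum_mul_left,
        ← Summable.tsum_add (hA.mul_left (lam * z)) (hA2.mul_left (mu / z)),
        ← Summable.tsum_add (hA1.mul_left (-(lam + mu + xi)))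
          ((hA.mul_left (lam * z)).add (hA2.mul_left (mu / z)))]
      exact tsum_congr hFval
    have hS1 : ∑' n, A n = A 0 + ∑' n, A (n + 1) := Summable.tsum_eq_zero_add hA
    have hS2 : ∑' n, A (n + 1) = A 1 + ∑' n, A (n + 2) := Summable.tsum_eq_zero_add hA1
    have hG0 : caputoD α G t
        = caputoD α (P 0) t + ∑' n, z ^ (n + 1) * caputoD α (P (n + 1)) t := by
      rw [hterm t ht]
      have hf : Summable (fun n : ℕ => z ^ n * caputoD α (P n) t) :=
        (summable_nat_add_iff 1).1 hF
      simpa using Summable.tsum_eq_zero_add hf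
    have hGt : G t = A 0 + (A 1 + ∑' n, A (n + 2)) := by
      rw [hG t, ← hAdef]; rw [hS1, hS2]
    have hA0 : A 0 = P 0 t := by simp [hAdef]
    have hA1v : A 1 = z * P 1 t := by simp [hAdef]
    rw [hG0, heq0 t ht, htsumF, hS1, hS2, hGt, hA0, hA1v]
    field_simp
    ring
end

section
/- Fix λ>0, μ>0, ξ≥0, α∈(0,1), s>0, i∈ℕ and q∈ℝ. Let a₁, a₂ ∈ ℂ satisfy a₁ + a₂ = (s^α+λ+μ+ξ)/λ and a₁·a₂ = μ/λ (in particular a₁ ≠ 1 and a₂ ≠ 1, since −λ(1−a₁)(1−a₂) = s^α + ξ > 0). Define h(z) = (z^{i+1} s^{α−1} + ξ z s^{−1} − (1−z)·μq) / (−λ(z−a₁)(z−a₂)) for z near 1. Then h is differentiable at z = 1 and h′(1) = (i·s^{α−1} + μq + s^{−1}(λ−μ)) / (ξ + s^α). -/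
open Real

theorem stmt6 (lam mu xi α s q : ℝ) (hlam : 0 < lam) (hmu : 0 < mu) (hxi : 0 ≤ xi)
    (hα : α ∈ Set.Ioo (0:ℝ) 1) (hs : 0 < s) (i : ℕ)
    (a₁ a₂ : ℂ)
    (hsum : a₁ + a₂ = (((s ^ α + lam + mu + xi) / lam : ℝ) : ℂ))
    (hprod : a₁ * a₂ = ((mu / lam : ℝ) : ℂ)) :
    HasDerivAt
      (fun z : ℂ =>
        (z ^ (i + 1) * ((s ^ (α - 1) : ℝ) : ℂ) + (xi : ℂ) * z * (s : ℂ)⁻¹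
            - (1 - z) * (mu : ℂ) * (q : ℂ))
          / (-(lam : ℂ) * (z - a₁) * (z - a₂)))
      ((((i : ℂ)) * ((s ^ (α - 1) : ℝ) : ℂ) + (mu : ℂ) * (q : ℂ)
          + (s : ℂ)⁻¹ * (((lam - mu : ℝ)) : ℂ))
        / ((xi : ℂ) + ((s ^ α : ℝ) : ℂ)))
      1 := by
  set A : ℂ := ((s ^ (α - 1) : ℝ) : ℂ) with hA
  set B : ℂ := ((s ^ α : ℝ) : ℂ) with hBdef
  have hsne : (s : ℂ) ≠ 0 := by exact_mod_cast hs.ne'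
  have hlamne : (lam : ℂ) ≠ 0 := by exact_mod_cast hlam.ne'
  have hB : B = A * s := by
    rw [hA, hBdef, ← Complex.ofReal_mul]
    norm_cast
    rw [Real.rpow_sub hs, Real.rpow_one]
    field_simp
  have h1 : (lam : ℂ) * (a₁ + a₂) = B + lam + mu + xi := by
    rw [hsum, hBdef]; push_cast; field_simp
  have h2 : (lam : ℂ) * (a₁ * a₂) = mu := by
    rw [hprod]; push_cast; field_simp
  have hDval : -(lam : ℂ) * ((1:ℂ) - a₁) * ((1:ℂ) - a₂) = B + xi := by
    linear_combination h1 - h2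
  have hBpos : (0:ℝ) < s ^ α + xi := by
    have := Real.rpow_pos_of_pos hs α; linarith
  have hDne : -(lam : ℂ) * ((1:ℂ) - a₁) * ((1:ℂ) - a₂) ≠ 0 := by
    rw [hDval, hBdef, ← Complex.ofReal_add]
    exact_mod_cast hBpos.ne'
  have hBxine : B + (xi:ℂ) ≠ 0 := by rw [← hDval]; exact hDne
  have hN : HasDerivAt (fun z : ℂ => z ^ (i + 1) * A + (xi : ℂ) * z * (s : ℂ)⁻¹
      - (1 - z) * (mu : ℂ) * (q : ℂ))
      (((i:ℂ)+1) * A + (xi : ℂ) * (s:ℂ)⁻¹ + (mu:ℂ) * q) 1 := by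
    have hp := (hasDerivAt_pow (i+1) (1:ℂ)).mul_const A
    have hq := ((hasDerivAt_id (1:ℂ)).const_mul (xi:ℂ)).mul_const ((s:ℂ)⁻¹)
    have hr := (((hasDerivAt_const (1:ℂ) (1:ℂ)).sub (hasDerivAt_id 1)).mul_const
      ((mu:ℂ))).mul_const ((q:ℂ))
    have := (hp.add hq).sub hr
    refine HasDerivAt.congr_deriv this ?_
    push_cast
    ring
  have hD : HasDerivAt (fun z : ℂ => -(lam : ℂ) * (z - a₁) * (z - a₂))
      (-(lam:ℂ) * (((1:ℂ) - a₂) + ((1:ℂ) - a₁))) 1 := by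
    have := (((hasDerivAt_id (1:ℂ)).sub_const a₁).const_mul (-(lam:ℂ))).mul
      ((hasDerivAt_id (1:ℂ)).sub_const a₂)
    refine HasDerivAt.congr_deriv this ?_
    simp only [id_eq]
    ring
  have := hN.div hD (by simpa using hDne)
  have e1 : ((1:ℂ)) ^ (i+1) * A + (xi:ℂ) * 1 * (s:ℂ)⁻¹ - (1-1) * (mu:ℂ) * (q:ℂ)
      = A + (xi:ℂ) * (s:ℂ)⁻¹ := by ring
  have hD'val : -(lam:ℂ) * (((1:ℂ) - a₂) + ((1:ℂ) - a₁)) = B + mu + xi - lam := by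
    linear_combination h1
  rw [show (-(lam : ℂ) * ((1:ℂ) - a₁) * ((1:ℂ) - a₂)) = B + xi from hDval,
    e1, hD'val] at this
  have hne' : (xi:ℂ) + B ≠ 0 := by rwa [add_comm]
  have hval : (((i : ℂ)) * A + (mu : ℂ) * (q : ℂ) + (s : ℂ)⁻¹ * (((lam - mu : ℝ)) : ℂ))
        / ((xi : ℂ) + B)
      = ((((i:ℂ)+1) * A + (xi : ℂ) * (s:ℂ)⁻¹ + (mu:ℂ) * q) * (B + ↑xi)
          - (A + ↑xi * (↑s)⁻¹) * (B + ↑mu + ↑xi - ↑lam)) / (B + ↑xi) ^ 2 := by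
    rw [div_eq_div_iff hne' (pow_ne_zero 2 hBxine), hB]
    field_simp
    push_cast
    ring
  rw [hval]
  exact this
end

section
/- For all real β>0, γ>0, δ>0, every real s>0 and every w∈ℝ with |w| < s^β, the Laplace transform of t ↦ t^{γ−1} E^δ_{β,γ}(w t^β) satisfies ∫_0^∞ e^{−st} t^{γ−1} E^δ_{β,γ}(w t^β) dt = s^{βδ−γ}/(s^β − w)^δ. -/
open MeasureTheory Real Filter

noncomputable def bc (δ : ℝ) (n : ℕ) : ℝ :=
  Real.Gamma (δ + n) / (n.factorial * Real.Gamma δ)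

lemma bc_pos {δ : ℝ} (hδ : 0 < δ) (n : ℕ) : 0 < bc δ n := by
  have h1 : 0 < Real.Gamma (δ + n) := Real.Gamma_pos_of_pos (by positivity)
  have h2 : 0 < Real.Gamma δ := Real.Gamma_pos_of_pos hδ
  have h3 : (0:ℝ) < n.factorial := by exact_mod_cast n.factorial_pos
  exact div_pos h1 (by positivity)

lemma bc_zero {δ : ℝ} (hδ : 0 < δ) : bc δ 0 = 1 := by
  have h2 : Real.Gamma δ ≠ 0 := (Real.Gamma_pos_of_pos hδ).ne'
  simp [bc, h2]

lemma bc_succ {δ : ℝ} (hδ : 0 < δ) (n : ℕ) :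
    bc δ (n + 1) * (n + 1) = (δ + n) * bc δ n := by
  have hne : δ + n ≠ 0 := by positivity
  have hG : Real.Gamma (δ + (n+1) : ℝ) = (δ + n) * Real.Gamma (δ + n) := by
    have := Real.Gamma_add_one hne
    rw [← this]; ring_nf
  have h2 : Real.Gamma δ ≠ 0 := (Real.Gamma_pos_of_pos hδ).ne'
  have h3 : (n.factorial : ℝ) ≠ 0 := by exact_mod_cast n.factorial_ne_zero
  have h4 : ((n+1).factorial : ℝ) = (n+1) * n.factorial := by
    rw [Nat.factorial_succ]; push_cast; ring
  rw [bc, bc]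
  have hcast : (δ + ((n+1:ℕ):ℝ)) = δ + (n:ℝ) + 1 := by push_cast; ring
  rw [hcast]
  have hG' : Real.Gamma (δ + (n:ℝ) + 1) = (δ + n) * Real.Gamma (δ + n) := by
    rw [Real.Gamma_add_one hne]
  rw [hG', h4]
  field_simp

lemma ratio_tendsto {δ c : ℝ} :
    Tendsto (fun n : ℕ => c * ((δ + n) / (n + 1))) atTop (nhds c) := by
  have h : Tendsto (fun n : ℕ => (δ + n) / (n + 1)) atTop (nhds 1) := by
    have h0 : Tendsto (fun n : ℕ => (δ - 1) / ((n:ℝ) + 1)) atTop (nhds 0) := by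
      have := tendsto_const_div_atTop_nhds_zero_nat (δ - 1)
      have heq : Tendsto (fun n : ℕ => (δ - 1) / ((n+1 : ℕ):ℝ)) atTop (nhds 0) :=
        this.comp (tendsto_add_atTop_nat 1)
      simpa using heq
    have heq : (fun n : ℕ => (δ + n) / (n + 1)) = fun n : ℕ => (δ - 1) / ((n:ℝ) + 1) + 1 := by
      funext n
      have : (n:ℝ) + 1 ≠ 0 := by positivity
      field_simp
      ring
    rw [heq]
    simpa using h0.add_const 1
  simpa using (tendsto_const_nhds.mul h : Tendsto (fun n : ℕ => c * ((δ + n)/(n+1))) atTop (nhds (c*1)))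

lemma bc_summable {δ : ℝ} (hδ : 0 < δ) {ρ : ℝ} (hρ0 : 0 < ρ) (hρ1 : ρ < 1) :
    Summable (fun n : ℕ => bc δ n * ρ ^ n) := by
  apply summable_of_ratio_test_tendsto_lt_one hρ1
  · exact Filter.Eventually.of_forall fun n => (mul_pos (bc_pos hδ n) (pow_pos hρ0 n)).ne'
  · have key : (fun n : ℕ => ‖bc δ (n+1) * ρ ^ (n+1)‖ / ‖bc δ n * ρ ^ n‖)
        = fun n : ℕ => ρ * ((δ + n) / (n + 1)) := by
      funext n
      have h1 : 0 < bc δ n * ρ ^ n := mul_pos (bc_pos hδ n) (pow_pos hρ0 n)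
      have h2 : 0 < bc δ (n+1) * ρ ^ (n+1) := mul_pos (bc_pos hδ (n+1)) (pow_pos hρ0 (n+1))
      rw [Real.norm_of_nonneg h1.le, Real.norm_of_nonneg h2.le]
      have hb := bc_succ hδ n
      have hbn : bc δ n ≠ 0 := (bc_pos hδ n).ne'
      have hn1 : ((n:ℝ) + 1) ≠ 0 := by positivity
      have hbs : bc δ (n+1) = (δ + n) * bc δ n / (n + 1) := by
        field_simp at hb ⊢; linarith [hb]
      rw [hbs, pow_succ]
      field_simp
    rw [key]
    exact ratio_tendsto

lemma bc_x_summable {δ : ℝ} (hδ : 0 < δ) {x : ℝ} (hx : |x| < 1) :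
    Summable (fun n : ℕ => bc δ n * x ^ n) := by
  set ρ := (|x| + 1) / 2 with hρ
  have hρ0 : 0 < ρ := by positivity
  have hρ1 : ρ < 1 := by rw [hρ]; linarith
  have hxρ : |x| ≤ ρ := by rw [hρ]; linarith [abs_nonneg x]
  apply Summable.of_norm_bounded (bc_summable hδ hρ0 hρ1)
  intro n
  rw [norm_mul, Real.norm_of_nonneg (bc_pos hδ n).le, norm_pow, Real.norm_eq_abs]
  exact mul_le_mul_of_nonneg_left (pow_le_pow_left₀ (abs_nonneg x) hxρ n) (bc_pos hδ n).le

lemma bc_deriv_summable {δ : ℝ} (hδ : 0 < δ) {ρ : ℝ} (hρ0 : 0 < ρ) (hρ1 : ρ < 1) :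
    Summable (fun n : ℕ => bc δ n * ((n:ℝ) * ρ ^ (n - 1))) := by
  apply summable_of_ratio_test_tendsto_lt_one hρ1
  · filter_upwards [eventually_ge_atTop 1] with n hn
    have hn0 : (0:ℝ) < n := by exact_mod_cast hn
    exact (mul_pos (bc_pos hδ n) (mul_pos hn0 (pow_pos hρ0 _))).ne'
  · have key : ∀ᶠ n : ℕ in atTop, ‖bc δ (n+1) * (((n+1:ℕ):ℝ) * ρ ^ ((n+1) - 1))‖ / ‖bc δ n * ((n:ℝ) * ρ ^ (n - 1))‖
        = ρ * ((δ + n) / n) := by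
      filter_upwards [eventually_ge_atTop 1] with n hn
      obtain ⟨m, rfl⟩ := Nat.exists_eq_add_of_le hn
      set k := 1 + m with hk
      have hk0 : (0:ℝ) < k := by rw [hk]; push_cast; linarith [Nat.cast_nonneg (α := ℝ) m]
      have h1 : 0 < bc δ k * ((k:ℝ) * ρ ^ (k - 1)) :=
        mul_pos (bc_pos hδ k) (mul_pos hk0 (pow_pos hρ0 _))
      have hk10 : (0:ℝ) < ((k+1:ℕ):ℝ) := by positivity
      have h2 : 0 < bc δ (k+1) * (((k+1:ℕ):ℝ) * ρ ^ ((k+1) - 1)) :=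
        mul_pos (bc_pos hδ (k+1)) (mul_pos hk10 (pow_pos hρ0 _))
      rw [Real.norm_of_nonneg h1.le, Real.norm_of_nonneg h2.le]
      have hb := bc_succ hδ k
      have hbn : bc δ k ≠ 0 := (bc_pos hδ k).ne'
      have hn1 : ((k:ℝ) + 1) ≠ 0 := by positivity
      have hbs : bc δ (k+1) = (δ + k) * bc δ k / (k + 1) := by
        field_simp at hb ⊢; linarith [hb]
      have hpow : ρ ^ ((k+1) - 1) = ρ ^ (k - 1) * ρ := by
        have : (k + 1) - 1 = (k - 1) + 1 := by omega
        rw [this, pow_succ]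
      rw [hbs, hpow]
      push_cast
      have hρn : ρ ^ (k-1) ≠ 0 := by positivity
      field_simp
    have h2 : Tendsto (fun n : ℕ => ρ * ((δ + n) / (n:ℝ))) atTop (nhds ρ) := by
      have h0 : Tendsto (fun n : ℕ => δ / (n:ℝ)) atTop (nhds 0) :=
        tendsto_const_div_atTop_nhds_zero_nat δ
      have h1 : Tendsto (fun n : ℕ => δ / (n:ℝ) + 1) atTop (nhds 1) := by
        simpa using h0.add_const 1
      have heq : ∀ᶠ n : ℕ in atTop, δ / (n:ℝ) + 1 = (δ + n) / (n:ℝ) := by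
        filter_upwards [eventually_ge_atTop 1] with n hn
        have hn0 : (n:ℝ) ≠ 0 := by
          have : (0:ℝ) < n := by exact_mod_cast hn
          exact this.ne'
        field_simp
      have := (h1.congr' heq).const_mul ρ
      simpa using this
    exact h2.congr' (key.mono fun n hn => hn.symm)

lemma deriv_summable_at {δ : ℝ} (hδ : 0 < δ) {ρ y : ℝ} (hρ0 : 0 < ρ) (hρ1 : ρ < 1)
    (hy : |y| ≤ ρ) : Summable (fun n : ℕ => bc δ n * ((n:ℝ) * y ^ (n - 1))) := by
  apply Summable.of_norm_bounded (bc_deriv_summable hδ hρ0 hρ1)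
  intro n
  rw [norm_mul, Real.norm_of_nonneg (bc_pos hδ n).le, norm_mul, norm_pow,
    Real.norm_natCast, Real.norm_eq_abs]
  have h1 : |y| ^ (n-1) ≤ ρ ^ (n-1) := pow_le_pow_left₀ (abs_nonneg y) hy _
  have h2 : (0:ℝ) ≤ (n:ℝ) := Nat.cast_nonneg n
  have := mul_le_mul_of_nonneg_left h1 h2
  exact mul_le_mul_of_nonneg_left this (bc_pos hδ n).le

/-- Key ODE-style identity: `(1-y) * f'(y) = δ * f(y)`. -/
lemma key_identity {δ : ℝ} (hδ : 0 < δ) {y : ℝ} (hy : |y| < 1)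
    (hd : Summable (fun n : ℕ => bc δ n * ((n:ℝ) * y ^ (n - 1)))) :
    (1 - y) * ∑' n : ℕ, bc δ n * ((n:ℝ) * y ^ (n - 1))
      = δ * ∑' n : ℕ, bc δ n * y ^ n := by
  set d : ℕ → ℝ := fun n => bc δ n * ((n:ℝ) * y ^ (n - 1)) with hd_def
  have hsum_f : Summable (fun n : ℕ => bc δ n * y ^ n) := bc_x_summable hδ hy
  -- ∑ d = ∑_{n} d (n+1)
  have hshift : Summable (fun n => d (n + 1)) := (summable_nat_add_iff 1).mpr hd
  have hD : ∑' n, d n = ∑' n, d (n + 1) := by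
    rw [Summable.tsum_eq_zero_add hd]
    simp [hd_def]
  -- d (n+1) = δ * (bc δ n * y^n) + n * (bc δ n * y^n)
  have hterm : ∀ n : ℕ, d (n + 1) = δ * (bc δ n * y ^ n) + (n:ℝ) * (bc δ n * y ^ n) := by
    intro n
    have hb := bc_succ hδ n
    have hsub : (n + 1) - 1 = n := rfl
    have : d (n + 1) = (bc δ (n+1) * ((n:ℝ)+1)) * y ^ n := by
      simp only [hd_def, hsub]
      push_cast
      ring
    rw [this, hb]; ring
  -- T := ∑ n * bc n * y^n, summable
  have hT : Summable (fun n : ℕ => (n:ℝ) * (bc δ n * y ^ n)) := by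
    have heq : ∀ n : ℕ, (n:ℝ) * (bc δ n * y ^ n) = y * d n := by
      intro n
      rcases n with _ | m
      · simp [hd_def]
      · have hsub : (m + 1) - 1 = m := rfl
        simp only [hd_def, hsub]
        push_cast
        ring
    exact (hd.mul_left y).congr fun n => (heq n).symm
  have hyD : y * ∑' n, d n = ∑' n : ℕ, (n:ℝ) * (bc δ n * y ^ n) := by
    rw [← tsum_mul_left]
    apply tsum_congr
    intro n
    rcases n with _ | m
    · simp [hd_def]
    · have hsub : (m + 1) - 1 = m := rfl
      simp only [hd_def, hsub]
      push_cast
      ring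
  have hsplit : ∑' n, d (n + 1) = δ * (∑' n, bc δ n * y ^ n) + ∑' n : ℕ, (n:ℝ) * (bc δ n * y ^ n) := by
    rw [tsum_congr hterm, Summable.tsum_add (hsum_f.mul_left δ) hT, tsum_mul_left]
  have : (1 - y) * ∑' n, d n = ∑' n, d n - y * ∑' n, d n := by ring
  rw [this, hyD, hD, hsplit]
  ring

lemma binom_tsum {δ : ℝ} (hδ : 0 < δ) {x : ℝ} (hx : |x| < 1) :
    ∑' n : ℕ, bc δ n * x ^ n = (1 - x) ^ (-δ) := by
  set ρ := (|x| + 1) / 2 with hρ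
  have hρ0 : 0 < ρ := by positivity
  have hρ1 : ρ < 1 := by rw [hρ]; linarith
  have hxρ : |x| < ρ := by rw [hρ]; linarith
  set t : Set ℝ := Set.Ioo (-ρ) ρ with ht_def
  have ht : IsOpen t := isOpen_Ioo
  have h't : IsPreconnected t := (convex_Ioo _ _).isPreconnected
  have hmem : ∀ y ∈ t, |y| ≤ ρ := fun y hy => by
    rw [abs_le]; exact ⟨hy.1.le, hy.2.le⟩
  have hmem1 : ∀ y ∈ t, |y| < 1 := fun y hy => lt_of_le_of_lt (hmem y hy) hρ1
  set g : ℕ → ℝ → ℝ := fun n y => bc δ n * y ^ n with hg_def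
  set g' : ℕ → ℝ → ℝ := fun n y => bc δ n * ((n:ℝ) * y ^ (n - 1)) with hg'_def
  set u : ℕ → ℝ := fun n => bc δ n * ((n:ℝ) * ρ ^ (n - 1)) with hu_def
  have hu : Summable u := bc_deriv_summable hδ hρ0 hρ1
  have hg : ∀ n y, y ∈ t → HasDerivAt (g n) (g' n y) y := fun n y _ =>
    (hasDerivAt_pow n y).const_mul (bc δ n)
  have hg' : ∀ n y, y ∈ t → ‖g' n y‖ ≤ u n := by
    intro n y hy
    simp only [hg'_def, hu_def]
    rw [norm_mul, Real.norm_of_nonneg (bc_pos hδ n).le, norm_mul, norm_pow,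
      Real.norm_natCast, Real.norm_eq_abs]
    have h1 : |y| ^ (n-1) ≤ ρ ^ (n-1) := pow_le_pow_left₀ (abs_nonneg y) (hmem y hy) _
    have := mul_le_mul_of_nonneg_left h1 (Nat.cast_nonneg (α := ℝ) n)
    exact mul_le_mul_of_nonneg_left this (bc_pos hδ n).le
  have hy₀ : (0:ℝ) ∈ t := by constructor <;> simp [hρ0] <;> linarith
  have hg0 : Summable fun n => g n 0 := bc_x_summable hδ (by simpa using zero_lt_one)
  set f : ℝ → ℝ := fun z => ∑' n : ℕ, g n z with hf_def
  have hf' : ∀ y ∈ t, HasDerivAt f (∑' n : ℕ, g' n y) y := fun y hy =>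
    hasDerivAt_tsum_of_isPreconnected hu ht h't hg hg' hy₀ hg0 hy
  -- F := (1 - z)^δ * f z has zero derivative on t
  set F : ℝ → ℝ := fun z => (1 - z) ^ δ * f z with hF_def
  have hF : ∀ y ∈ t, HasDerivAt F 0 y := by
    intro y hy
    have h1y : 0 < 1 - y := by
      have := (hmem1 y hy)
      rw [abs_lt] at this
      linarith [this.2]
    have hr : HasDerivAt (fun z : ℝ => (1 - z) ^ δ) (δ * (1 - y) ^ (δ - 1) * (-1)) y := by
      have hrp := Real.hasDerivAt_rpow_const (x := 1 - y) (p := δ) (Or.inl h1y.ne')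
      have hlin : HasDerivAt (fun z : ℝ => 1 - z) (-1) y := by
        simpa using (hasDerivAt_id y).const_sub 1
      exact hrp.comp y hlin
    have hD := hf' y hy
    have : HasDerivAt F _ y := hr.mul hD
    convert this using 1
    have hkey := key_identity hδ (hmem1 y hy)
      (deriv_summable_at hδ hρ0 hρ1 (hmem y hy))
    have hfy : f y = ∑' n : ℕ, bc δ n * y ^ n := rfl
    have hrw : (1 - y) ^ δ = (1 - y) ^ (δ - 1) * (1 - y) := by
      rw [Real.rpow_sub h1y, Real.rpow_one]
      field_simp
    rw [hrw, hfy]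
    have : (1 - y) ^ (δ - 1) * (1 - y) * ∑' n : ℕ, g' n y
        = (1 - y) ^ (δ - 1) * ((1 - y) * ∑' n : ℕ, bc δ n * ((n:ℝ) * y ^ (n - 1))) := by
      rw [hg'_def]; ring
    rw [show δ * (1 - y) ^ (δ - 1) * (-1) * ∑' n : ℕ, bc δ n * y ^ n
          + (1 - y) ^ (δ - 1) * (1 - y) * ∑' n : ℕ, g' n y
        = (1 - y) ^ (δ - 1) * ((1 - y) * ∑' n : ℕ, bc δ n * ((n:ℝ) * y ^ (n - 1)))
          - (1 - y) ^ (δ - 1) * (δ * ∑' n : ℕ, bc δ n * y ^ n) from by rw [hg'_def]; ring]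
    rw [hkey]
    ring
  -- F is constant on t, F 0 = 1
  have hxt : x ∈ t := by
    rw [ht_def, Set.mem_Ioo, ← abs_lt]; exact hxρ
  have hFx : F x = F 0 := by
    rcases le_or_gt 0 x with hx0 | hx0
    · have hsub : Set.Icc (0:ℝ) x ⊆ t := fun z hz => ⟨by linarith [hz.1], lt_of_le_of_lt hz.2 hxt.2⟩
      have hcont : ContinuousOn F (Set.Icc 0 x) := fun z hz =>
        ((hF z (hsub hz)).continuousAt).continuousWithinAt
      exact constant_of_has_deriv_right_zero hcont
        (fun z hz => ((hF z (hsub (Set.mem_Icc_of_Ico hz))).hasDerivWithinAt))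
        x (Set.right_mem_Icc.mpr hx0)
    · have hsub : Set.Icc x (0:ℝ) ⊆ t := fun z hz => ⟨lt_of_lt_of_le hxt.1 hz.1, by
        have := hz.2; linarith [hρ0]⟩
      have hcont : ContinuousOn F (Set.Icc x 0) := fun z hz =>
        ((hF z (hsub hz)).continuousAt).continuousWithinAt
      exact (constant_of_has_deriv_right_zero hcont
        (fun z hz => ((hF z (hsub (Set.mem_Icc_of_Ico hz))).hasDerivWithinAt))
        0 (Set.right_mem_Icc.mpr hx0.le)).symm
  have hF0 : F 0 = 1 := by
    have hf0 : f 0 = 1 := by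
      have h01 : ∑' n : ℕ, g n 0 = 1 := by
        rw [tsum_eq_single 0 (fun n hn => by
          rcases n with _ | m
          · exact absurd rfl hn
          · simp [hg_def])]
        simp [hg_def, bc_zero hδ]
      exact h01
    simp [hF_def, hf0]
  -- conclude
  have h1x : 0 < 1 - x := by rw [abs_lt] at hx; linarith [hx.2]
  have hne : (1 - x) ^ δ ≠ 0 := (Real.rpow_pos_of_pos h1x δ).ne'
  have : (1 - x) ^ δ * ∑' n : ℕ, bc δ n * x ^ n = 1 := by
    have := hFx.trans hF0
    simpa [hF_def, hf_def, hg_def] using this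
  rw [Real.rpow_neg h1x.le]
  field_simp at this ⊢
  linarith [this]

/-- Three-parameter Mittag-Leffler function
`E^δ_{β,γ}(w) = ∑ w^r Γ(δ+r) / (r! Γ(βr+γ) Γ(δ))`. -/
noncomputable def mittagLeffler3 (β γ δ w : ℝ) : ℝ :=
  ∑' r : ℕ, w ^ r * Real.Gamma (δ + r) / (r.factorial * Real.Gamma (β * r + γ) * Real.Gamma δ)

theorem stmt19 (β γ δ s w : ℝ) (hβ : 0 < β) (hγ : 0 < γ) (hδ : 0 < δ)
    (hs : 0 < s) (hw : |w| < s ^ β) :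
    (∫ t in Set.Ioi (0:ℝ), Real.exp (-s * t) * (t ^ (γ - 1) * mittagLeffler3 β γ δ (w * t ^ β)))
      = s ^ (β * δ - γ) / (s ^ β - w) ^ δ := by
  have hA : (0:ℝ) < s ^ β := Real.rpow_pos_of_pos hs β
  have hB : (0:ℝ) < s ^ β - w := by
    have : w ≤ |w| := le_abs_self w
    linarith
  set c : ℕ → ℝ := fun r =>
    w ^ r * Real.Gamma (δ + r) / (r.factorial * Real.Gamma (β * r + γ) * Real.Gamma δ) with hc_def
  set G : ℕ → ℝ → ℝ := fun r t => c r * (t ^ (β * r + γ - 1) * Real.exp (-(s * t))) with hG_def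
  have hapos : ∀ r : ℕ, (0:ℝ) < β * r + γ := by
    intro r
    have : (0:ℝ) ≤ β * r := by positivity
    linarith
  -- pointwise identity
  have hpt : Set.EqOn (fun t : ℝ => Real.exp (-s * t) * (t ^ (γ - 1) * mittagLeffler3 β γ δ (w * t ^ β)))
      (fun t => ∑' r : ℕ, G r t) (Set.Ioi 0) := by
    intro t ht
    have ht0 : (0:ℝ) < t := ht
    simp only [mittagLeffler3]
    rw [← mul_assoc, ← tsum_mul_left]
    apply tsum_congr
    intro r
    have e1 : (w * t ^ β) ^ r = w ^ r * t ^ (β * r) := by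
      rw [mul_pow, ← Real.rpow_natCast (t ^ β) r, ← Real.rpow_mul ht0.le]
    have e2 : t ^ (β * r + γ - 1) = t ^ (β * r) * t ^ (γ - 1) := by
      rw [← Real.rpow_add ht0]; ring_nf
    simp only [hG_def, hc_def]
    rw [e1, e2, neg_mul]
    ring
  rw [setIntegral_congr_fun measurableSet_Ioi hpt]
  -- integrability of each term
  have hInt : ∀ r : ℕ, Integrable (G r) (volume.restrict (Set.Ioi 0)) := by
    intro r
    have hm1 : (-1:ℝ) < β * r + γ - 1 := by linarith [hapos r]
    have h0 : IntegrableOn (fun t : ℝ => t ^ (β * r + γ - 1) * Real.exp (-s * t ^ (1:ℝ)))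
        (Set.Ioi 0) := integrableOn_rpow_mul_exp_neg_mul_rpow hm1 one_pos hs
    have h1 : IntegrableOn (fun t : ℝ => t ^ (β * r + γ - 1) * Real.exp (-(s * t)))
        (Set.Ioi 0) := by
      apply h0.congr_fun _ measurableSet_Ioi
      intro t ht
      simp only [Real.rpow_one, neg_mul]
    exact h1.const_mul (c r)
  -- value of each term integral
  have hval : ∀ r : ℕ, (∫ t in Set.Ioi (0:ℝ), G r t)
      = c r * ((1 / s) ^ (β * r + γ) * Real.Gamma (β * r + γ)) := by
    intro r
    rw [← integral_rpow_mul_exp_neg_mul_Ioi (hapos r) hs, ← integral_const_mul]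
  -- norm integrals
  have hnorm : ∀ r : ℕ, (∫ t in Set.Ioi (0:ℝ), ‖G r t‖)
      = |c r| * ((1 / s) ^ (β * r + γ) * Real.Gamma (β * r + γ)) := by
    intro r
    rw [← integral_rpow_mul_exp_neg_mul_Ioi (hapos r) hs, ← integral_const_mul]
    apply setIntegral_congr_fun measurableSet_Ioi
    intro t ht
    have ht0 : (0:ℝ) < t := ht
    have hpos : (0:ℝ) < t ^ (β * r + γ - 1) * Real.exp (-(s * t)) :=
      mul_pos (Real.rpow_pos_of_pos ht0 _) (Real.exp_pos _)
    simp only [hG_def, norm_mul, Real.norm_eq_abs]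
    rw [abs_of_pos (Real.rpow_pos_of_pos ht0 _), abs_of_pos (Real.exp_pos _)]
  -- the |c r| expression
  have hGpos : ∀ r : ℕ, 0 < Real.Gamma (β * r + γ) := fun r => Real.Gamma_pos_of_pos (hapos r)
  have hGne : ∀ r : ℕ, Real.Gamma (β * r + γ) ≠ 0 := fun r => (hGpos r).ne'
  have hGd : 0 < Real.Gamma δ := Real.Gamma_pos_of_pos hδ
  have hGdr : ∀ r : ℕ, 0 < Real.Gamma (δ + r) := fun r => Real.Gamma_pos_of_pos (by positivity)
  have hfact : ∀ r : ℕ, (0:ℝ) < r.factorial := fun r => by exact_mod_cast r.factorial_pos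
  have he3 : ∀ r : ℕ, ((1:ℝ) / s) ^ (β * r + γ) = ((1 / s) ^ β) ^ r * (1 / s) ^ γ := by
    intro r
    rw [Real.rpow_add (by positivity), ← Real.rpow_natCast ((1/s) ^ β) r,
      ← Real.rpow_mul (by positivity)]
  have hinv : ((1:ℝ) / s) ^ β = (s ^ β)⁻¹ := by
    rw [one_div, Real.inv_rpow hs.le]
  have hcabs : ∀ r : ℕ, |c r| = |w| ^ r * Real.Gamma (δ + r)
      / (r.factorial * Real.Gamma (β * r + γ) * Real.Gamma δ) := by
    intro r
    simp only [hc_def]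
    rw [abs_div, abs_mul, abs_pow, abs_of_pos (hGdr r),
      abs_of_pos (mul_pos (mul_pos (hfact r) (hGpos r)) hGd)]
  set x : ℝ := w * (1 / s) ^ β with hx_def
  have hxabs : |x| = |w| * (1 / s) ^ β := by
    rw [hx_def, abs_mul, abs_of_pos (Real.rpow_pos_of_pos (by positivity) β)]
  have hxlt : |x| < 1 := by
    rw [hxabs, hinv]
    rw [← div_eq_mul_inv, div_lt_one hA]
    exact hw
  -- coefficient identity (with abs)
  have hkeyabs : ∀ r : ℕ, |c r| * ((1 / s) ^ (β * r + γ) * Real.Gamma (β * r + γ))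
      = (1 / s) ^ γ * (bc δ r * |x| ^ r) := by
    intro r
    rw [hcabs r, he3 r, hxabs, mul_pow, bc]
    field_simp
  have hkey : ∀ r : ℕ, c r * ((1 / s) ^ (β * r + γ) * Real.Gamma (β * r + γ))
      = (1 / s) ^ γ * (bc δ r * x ^ r) := by
    intro r
    simp only [hc_def]
    rw [he3 r, hx_def, mul_pow, bc]
    field_simp
  have hSum : Summable fun r : ℕ => ∫ t in Set.Ioi (0:ℝ), ‖G r t‖ := by
    apply Summable.congr ((bc_x_summable hδ (show |(|x|)| < 1 by rwa [abs_abs])).mul_left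
      ((1 / s) ^ γ))
    intro r
    rw [hnorm r]
    exact (hkeyabs r).symm
  rw [← integral_tsum_of_summable_integral_norm hInt hSum]
  rw [tsum_congr (fun r => (hval r).trans (hkey r)), tsum_mul_left, binom_tsum hδ hxlt]
  -- final algebra
  have h1x : 1 - x = (s ^ β - w) / s ^ β := by
    rw [hx_def, hinv]
    field_simp
  rw [h1x, Real.div_rpow hB.le hA.le]
  rw [Real.rpow_neg hB.le, Real.rpow_neg hA.le]
  have e4 : ((1:ℝ) / s) ^ γ = (s ^ γ)⁻¹ := by
    rw [one_div, Real.inv_rpow hs.le]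
  have e5 : (s ^ β) ^ δ = s ^ (β * δ) := by
    rw [← Real.rpow_mul hs.le]
  have e6 : s ^ (β * δ - γ) = s ^ (β * δ) / s ^ γ := Real.rpow_sub hs _ _
  rw [e4, e5, e6]
  have hne1 : (s:ℝ) ^ γ ≠ 0 := (Real.rpow_pos_of_pos hs γ).ne'
  have hne2 : (s:ℝ) ^ (β * δ) ≠ 0 := (Real.rpow_pos_of_pos hs _).ne'
  have hne3 : (s ^ β - w) ^ δ ≠ 0 := (Real.rpow_pos_of_pos hB δ).ne'
  field_simp
end
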